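/- arXiv:2112.10385 — 3 statements merged into one kernel-verified Lean document; each statement's English description precedes it below -/
import Mathlib

section
/- Let $\mathbf{k}$ be a field of characteristic $p > 0$ and $\gamma < 0$. Then the Artin–Schreier polynomial $x^p - x - T^{\gamma}$ has no root in the Novikov field $\Lambda^{\min}$; consequently $\Lambda^{\min}$ is not algebraically closed. -/
open HahnSeries

lemma hahn_charP {k : Type*} [Field k] (p : ℕ) [CharP k p] :
    CharP (HahnSeries ℝ k) p :=
  charP_of_injective_ringHom (HahnSeries.C_injective (Γ := ℝ) (R := k)) p

lemma pow_coeff_order {k : Type*} [Field k] (x : HahnSeries ℝ k) (hx : x ≠ 0) (n : ℕ) :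
    (x ^ n).coeff ((n : ℝ) * x.order) = (x.coeff x.order) ^ n := by
  induction n with
  | zero => simp
  | succ n ih =>
    have h1 : ((n + 1 : ℕ) : ℝ) * x.order = (x ^ n).order + x.order := by
      rw [order_pow]
      push_cast
      simp [nsmul_eq_mul]
      ring
    rw [pow_succ, h1, coeff_mul_order_add_order, pow_succ, ← ih, leadingCoeff_eq,
      leadingCoeff_eq, order_pow, nsmul_eq_mul]

lemma key {k : Type*} [Field k] (p : ℕ) [Fact p.Prime] [CharP k p] :
    ∀ N : ℕ, ∀ γ : ℝ, γ < 0 → ∀ x : HahnSeries ℝ k,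
      (∀ c : ℝ, (x.support ∩ Set.Iic c).Finite) →
      x ^ p - x = HahnSeries.single γ (1 : k) →
      (x.support ∩ Set.Iic 0).ncard ≤ N → False := by
  haveI := hahn_charP (k := k) p
  have hp2 : 2 ≤ p := (Fact.out : p.Prime).two_le
  intro N
  induction N with
  | zero =>
    intro γ hγ x hfin heq hcard
    -- show x ≠ 0 and x has an element of support ≤ 0, contradiction with ncard = 0
    have hx : x ≠ 0 := by
      rintro rfl
      simp only [ne_eq, zero_pow (by omega : p ≠ 0), sub_zero] at heq
      have := congrArg (fun z => HahnSeries.coeff z γ) heq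
      simp at this
    -- order of x is negative
    have hord : x.order < 0 := by
      by_contra h
      push_neg at h
      have h1 : (x ^ p).coeff γ = 0 := by
        apply coeff_eq_zero_of_lt_order
        rw [order_pow, nsmul_eq_mul]
        calc γ < 0 := hγ
        _ ≤ (p : ℝ) * x.order := by positivity
      have h2 : x.coeff γ = 0 := coeff_eq_zero_of_lt_order (lt_of_lt_of_le hγ h)
      have := congrArg (fun z => HahnSeries.coeff z γ) heq
      simp only [coeff_sub, h1, h2, sub_zero, coeff_single_same] at this
      exact one_ne_zero this.symm
    have hmem : x.order ∈ x.support ∩ Set.Iic 0 := by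
      refine ⟨(mt coeff_order_eq_zero.mp hx), le_of_lt hord⟩
    have : (x.support ∩ Set.Iic 0).ncard ≠ 0 := by
      have := (Set.ncard_pos (hfin 0)).mpr ⟨_, hmem⟩
      omega
    omega
  | succ N ih =>
    intro γ hγ x hfin heq hcard
    have hx : x ≠ 0 := by
      rintro rfl
      simp only [ne_eq, zero_pow (by omega : p ≠ 0), sub_zero] at heq
      have := congrArg (fun z => HahnSeries.coeff z γ) heq
      simp at this
    set m := x.order with hm
    have hord : m < 0 := by
      by_contra h
      push_neg at h
      have h1 : (x ^ p).coeff γ = 0 := by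
        apply coeff_eq_zero_of_lt_order
        rw [order_pow, nsmul_eq_mul]
        calc γ < 0 := hγ
        _ ≤ (p : ℝ) * x.order := by positivity
      have h2 : x.coeff γ = 0 := coeff_eq_zero_of_lt_order (lt_of_lt_of_le hγ h)
      have := congrArg (fun z => HahnSeries.coeff z γ) heq
      simp only [coeff_sub, h1, h2, sub_zero, coeff_single_same] at this
      exact one_ne_zero this.symm
    have hpm : (p : ℝ) * m < m := by
      have h2p : (2:ℝ) ≤ p := by exact_mod_cast hp2
      have := mul_le_mul_of_nonpos_right h2p (le_of_lt hord)
      linarith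
    -- coefficient at p*m
    have hxpm : x.coeff ((p : ℝ) * m) = 0 := coeff_eq_zero_of_lt_order hpm
    have hxp : (x ^ p).coeff ((p : ℝ) * m) = (x.coeff m) ^ p := pow_coeff_order x hx p
    have hcoeff := congrArg (fun z => HahnSeries.coeff z ((p : ℝ) * m)) heq
    simp only [coeff_sub, hxp, hxpm, sub_zero] at hcoeff
    -- γ = p * m
    have hγm : γ = (p : ℝ) * m := by
      by_contra h
      rw [coeff_single_of_ne (fun hh => h hh.symm)] at hcoeff
      exact (mt coeff_order_eq_zero.mp hx) (pow_eq_zero_iff (by omega : p ≠ 0) |>.mp hcoeff)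
    rw [← hγm, coeff_single_same] at hcoeff
    -- leading coeff is 1
    have hlead : x.coeff m = 1 := by
      have : frobenius k p (x.coeff m) = frobenius k p 1 := by
        simp [frobenius_def, hcoeff]
      exact frobenius_inj k p this
    -- set y
    set y := x - HahnSeries.single m (1 : k) with hy
    have hsinglep : (HahnSeries.single m (1 : k)) ^ p = HahnSeries.single γ (1 : k) := by
      rw [single_pow, one_pow, hγm, nsmul_eq_mul]
    have heqy : y ^ p - y = HahnSeries.single m (1 : k) := by
      rw [hy, sub_pow_char, hsinglep, sub_sub_sub_comm, heq, sub_sub_cancel]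
    -- support of y
    have hysupp : y.support = x.support \ {m} := by
      ext g
      by_cases hg : g = m
      · subst hg
        simp [hy, HahnSeries.support, hlead]
      · simp [hy, HahnSeries.support, coeff_sub, coeff_single_of_ne hg, hg]
    have hyfin : ∀ c : ℝ, (y.support ∩ Set.Iic c).Finite := by
      intro c
      apply Set.Finite.subset (hfin c)
      rw [hysupp]
      exact Set.inter_subset_inter_left _ (Set.diff_subset)
    have hmemx : m ∈ x.support ∩ Set.Iic 0 :=
      ⟨(mt coeff_order_eq_zero.mp hx), le_of_lt hord⟩
    have hcard' : (y.support ∩ Set.Iic 0).ncard ≤ N := by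
      have heqset : y.support ∩ Set.Iic 0 = (x.support ∩ Set.Iic 0) \ {m} := by
        rw [hysupp]
        ext g; simp only [Set.mem_inter_iff, Set.mem_diff, Set.mem_singleton_iff]; tauto
      rw [heqset]
      have := Set.ncard_diff_singleton_lt_of_mem hmemx (hfin 0)
      omega
    exact ih m hord y hyfin heqy hcard'

/-- Over a field `k` of characteristic `p > 0` and for `γ < 0`, the Artin–Schreier
polynomial `x^p - x - T^γ` has no root in the Novikov field `Λ^min`, viewed as the
set of Hahn series whose support has finite intersection with every `(-∞, c]`. -/
theorem stmt4 {k : Type*} [Field k] (p : ℕ) [Fact p.Prime] [CharP k p]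
    (γ : ℝ) (hγ : γ < 0) :
    ¬ ∃ x : HahnSeries ℝ k,
        (∀ c : ℝ, (x.support ∩ Set.Iic c).Finite) ∧
        x ^ p - x = HahnSeries.single γ (1 : k) := by
  rintro ⟨x, hfin, heq⟩
  exact key p (x.support ∩ Set.Iic 0).ncard γ hγ x hfin heq le_rfl
end

section
/- Let $K$ be a field of characteristic $p > 0$ and $a \in K$. If the polynomial $f_a(x) = x^p - x - a \in K[x]$ has a root $b \in K$, then its roots are exactly $b, b+1, \ldots, b+(p-1)$, all of which lie in $K$. If $f_a$ has no root in $K$, then $f_a$ is irreducible over $K$ and $K[x]/(f_a)$ is a Galois extension of $K$ of degree $p$. -/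
open Polynomial

section Helpers

variable {L : Type*} [Field L] (p : ℕ) [Fact p.Prime] [CharP L p]

lemma AS_natCast_pow (n : ℕ) : ((n : L)) ^ p = (n : L) := by
  have := map_natCast (frobenius L p) n
  rwa [frobenius_def] at this

lemma AS_pow_eq_iff (c : L) : c ^ p = c ↔ ∃ n : ℕ, n < p ∧ c = (n : L) := by
  have hp1 : 1 < p := (Fact.out : p.Prime).one_lt
  constructor
  · intro h
    set g : L[X] := X ^ p - X with hg
    have hg0 : g ≠ 0 := fun h0 => by
      have := congrArg (fun q => coeff q p) h0
      simp only [hg, coeff_sub, coeff_X_pow, if_pos rfl, coeff_X, coeff_zero] at this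
      rw [if_neg (by omega : ¬ (1 : ℕ) = p)] at this
      norm_num at this
    have hdeg : g.natDegree ≤ p := by
      refine le_trans (natDegree_sub_le _ _) ?_
      simp [hp1.le]
    classical
    set S : Finset L := (Finset.range p).image (Nat.cast) with hS
    have hcardS : S.card = p := by
      rw [hS, Finset.card_image_of_injOn, Finset.card_range]
      intro x hx y hy hxy
      exact CharP.natCast_injOn_Iio L p (by simpa using hx) (by simpa using hy) hxy
    have hsub : S ⊆ g.roots.toFinset := by
      intro x hx
      obtain ⟨n, hn, rfl⟩ := Finset.mem_image.1 hx
      simp only [Multiset.mem_toFinset, mem_roots hg0, IsRoot, hg]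
      simp [AS_natCast_pow p n]
      exact hg0
    have hcard : g.roots.toFinset.card ≤ p :=
      le_trans (Multiset.toFinset_card_le _) (le_trans (card_roots' g) hdeg)
    have heq : S = g.roots.toFinset :=
      Finset.eq_of_subset_of_card_le hsub (by omega)
    have hc : c ∈ g.roots.toFinset := by
      simp only [Multiset.mem_toFinset, mem_roots hg0, IsRoot, hg]
      simp [h]
      exact hg0
    rw [← heq] at hc
    obtain ⟨n, hn, rfl⟩ := Finset.mem_image.1 hc
    exact ⟨n, Finset.mem_range.1 hn, rfl⟩
  · rintro ⟨n, _, rfl⟩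
    exact AS_natCast_pow p n

lemma AS_root_iff (a b : L) (hb : b ^ p - b = a) (z : L) :
    z ^ p - z = a ↔ ∃ n : ℕ, n < p ∧ z = b + (n : L) := by
  have key : z ^ p - z = a ↔ (z - b) ^ p = (z - b) := by
    rw [sub_pow_char, ← hb]
    constructor <;> intro h <;> linear_combination h
  rw [key, AS_pow_eq_iff p (z - b)]
  refine exists_congr fun n => and_congr_right fun _ => ?_
  rw [sub_eq_iff_eq_add']

end Helpers

section AS

variable {K : Type*} [Field K] (p : ℕ) [Fact p.Prime] [CharP K p] (a : K)

lemma AS_monic : (X ^ p - X - C a : K[X]).Monic := by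
  have hp1 : 1 < p := (Fact.out : p.Prime).one_lt
  have h : (X ^ p - X - C a : K[X]) = X ^ p - (X + C a) := by ring
  rw [h]
  apply monic_X_pow_sub
  refine lt_of_le_of_lt (degree_add_le _ _) (max_lt ?_ (degree_C_le.trans_lt ?_))
  · rw [degree_X]; exact_mod_cast hp1
  · exact_mod_cast (by omega : 0 < p)

lemma AS_natDegree : (X ^ p - X - C a : K[X]).natDegree = p := by
  have hp1 : 1 < p := (Fact.out : p.Prime).one_lt
  have h : (X ^ p - X - C a : K[X]) = X ^ p - (X + C a) := by ring
  rw [h]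
  have hd : degree (X + C a : K[X]) < degree (X ^ p : K[X]) := by
    rw [degree_X_pow, degree_X_add_C]
    exact_mod_cast hp1
  have : degree (X ^ p - (X + C a) : K[X]) = p := by
    rw [degree_sub_eq_left_of_degree_lt hd, degree_X_pow]
  exact natDegree_eq_of_degree_eq_some this

lemma AS_separable : (X ^ p - X - C a : K[X]).Separable := by
  refine ⟨0, -1, ?_⟩
  have : derivative (X ^ p - X - C a : K[X]) = -1 := by
    simp [derivative_X_pow, CharP.cast_eq_zero K p]
  rw [this]; ring

lemma AS_splits {L : Type*} [Field L] [CharP L p] (φ : K →+* L) (β : L)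
    (hβ : β ^ p - β = φ a) : Splits ((X ^ p - X - C a : K[X]).map φ) := by
  classical
  rw [splits_iff_card_roots]
  have hmap : (X ^ p - X - C a : K[X]).map φ = X ^ p - X - C (φ a) := by
    simp [Polynomial.map_sub, Polynomial.map_pow]
  rw [hmap]
  set g : L[X] := X ^ p - X - C (φ a) with hg
  have hg0 : g ≠ 0 := (AS_monic p (φ a)).ne_zero
  have hdeg : g.natDegree = p := AS_natDegree p (φ a)
  set S : Finset L := (Finset.range p).image (fun n : ℕ => β + (n : L)) with hS
  have hcardS : S.card = p := by
    rw [hS, Finset.card_image_of_injOn, Finset.card_range]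
    intro x hx y hy hxy
    exact CharP.natCast_injOn_Iio L p (by simpa using hx) (by simpa using hy)
      (by simpa using hxy)
  have hsub : S ⊆ g.roots.toFinset := by
    intro x hx
    obtain ⟨n, hn, rfl⟩ := Finset.mem_image.1 hx
    have : (β + (n : L)) ^ p - (β + (n : L)) = φ a :=
      (AS_root_iff p (φ a) β hβ _).2 ⟨n, Finset.mem_range.1 hn, rfl⟩
    rw [Multiset.mem_toFinset, mem_roots hg0, IsRoot.def, hg]
    simp only [eval_sub, eval_pow, eval_X, eval_C]
    linear_combination this
  have h1 : p ≤ g.roots.toFinset.card := hcardS ▸ Finset.card_le_card hsub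
  have h2 : g.roots.toFinset.card ≤ g.roots.card := Multiset.toFinset_card_le _
  have h3 : g.roots.card ≤ p := hdeg ▸ card_roots' g
  omega


lemma AS_multiset_sum {L : Type*} [Field L] (β : L) (R : Multiset L)
    (hR : ∀ r ∈ R, ∃ n : ℕ, r = β + (n : L)) :
    ∃ m : ℕ, R.sum = (Multiset.card R) • β + (m : L) := by
  induction R using Multiset.induction_on with
  | empty => exact ⟨0, by simp⟩
  | cons x s ih =>
    obtain ⟨m, hm⟩ := ih (fun r hr => hR r (Multiset.mem_cons_of_mem hr))
    obtain ⟨n, hn⟩ := hR x (Multiset.mem_cons_self x s)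
    refine ⟨n + m, ?_⟩
    rw [Multiset.sum_cons, hm, hn, Multiset.card_cons]
    push_cast
    rw [add_smul, one_smul]
    ring

lemma AS_no_middle_divisor (hna : ¬ ∃ b : K, b ^ p - b = a) (q : K[X])
    (hq : q ∣ (X ^ p - X - C a : K[X])) (hqm : q.Monic)
    (h1 : 0 < q.natDegree) (h2 : q.natDegree < p) : False := by
  set L := AlgebraicClosure K
  set φ : K →+* L := algebraMap K L with hφ
  letI : CharP L p := charP_of_injective_ringHom φ.injective p
  have hmap : (X ^ p - X - C a : K[X]).map φ = X ^ p - X - C (φ a) := by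
    simp [Polynomial.map_sub, Polynomial.map_pow]
  set g : L[X] := X ^ p - X - C (φ a) with hg
  have hg0 : g ≠ 0 := (AS_monic p (φ a)).ne_zero
  obtain ⟨β, hβ⟩ : ∃ β : L, β ^ p - β = φ a := by
    obtain ⟨β, hβ⟩ := IsAlgClosed.exists_root (p := g) (degree_ne_of_natDegree_ne (by
      rw [AS_natDegree]; exact (Fact.out : p.Prime).pos.ne'))
    refine ⟨β, ?_⟩
    have := hβ
    simp only [IsRoot, hg, eval_sub, eval_pow, eval_X, eval_C] at this
    linear_combination this
  -- the mapped divisor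
  set P : L[X] := q.map φ with hP
  have hPm : P.Monic := hqm.map φ
  have hPdvd : P ∣ g := by rw [← hmap]; exact Polynomial.map_dvd φ hq
  have hPdeg : P.natDegree = q.natDegree := natDegree_map_eq_of_injective φ.injective q
  have hPsplits : P.Splits :=
    (IsAlgClosed.splits g).of_dvd hg0 hPdvd
  have hcard : Multiset.card P.roots = q.natDegree := by
    rw [(splits_iff_card_roots).1 hPsplits, hPdeg]
  have hroots_le : P.roots ≤ g.roots := roots.le_of_dvd hg0 hPdvd
  obtain ⟨m, hsum⟩ := AS_multiset_sum β P.roots (fun r hr => by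
    have hrg : r ∈ g.roots := Multiset.subset_of_le hroots_le hr
    have : r ^ p - r = φ a := by
      have := (mem_roots hg0).1 hrg
      simp only [IsRoot, hg, eval_sub, eval_pow, eval_X, eval_C] at this
      linear_combination this
    obtain ⟨n, _, hn⟩ := (AS_root_iff p (φ a) β hβ r).1 this
    exact ⟨n, hn⟩)
  have hd0 : (q.natDegree : L) ≠ 0 := by
    rw [Ne, CharP.cast_eq_zero_iff L p]
    intro hdvd
    have := Nat.le_of_dvd h1 hdvd
    omega
  have hdK : (q.natDegree : K) ≠ 0 := by
    rw [Ne, CharP.cast_eq_zero_iff K p]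
    intro hdvd
    have := Nat.le_of_dvd h1 hdvd
    omega
  have heq : φ q.nextCoeff = -((q.natDegree : L) * β + (m : L)) := by
    rw [← nextCoeff_map φ.injective,
      hPsplits.nextCoeff_eq_neg_sum_roots_of_monic hPm, hsum, hcard, nsmul_eq_mul]
  set b : K := (-q.nextCoeff - (m : K)) / (q.natDegree : K) with hb
  have hφb : φ b = β := by
    have h1' : φ b = (-(φ q.nextCoeff) - (m : L)) / ((q.natDegree : L)) := by
      rw [hb, map_div₀, map_sub, map_neg, map_natCast, map_natCast]
    rw [h1', heq]
    rw [neg_neg, add_sub_cancel_right, mul_div_cancel_left₀ β hd0]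
  exact hna ⟨b, φ.injective (by rw [map_sub, map_pow, hφb, hβ])⟩

lemma AS_irreducible (hna : ¬ ∃ b : K, b ^ p - b = a) :
    Irreducible (X ^ p - X - C a : K[X]) := by
  have hp1 : 1 < p := (Fact.out : p.Prime).one_lt
  have hm := AS_monic p a
  have hnd := AS_natDegree p a
  have hf0 : (X ^ p - X - C a : K[X]) ≠ 0 := hm.ne_zero
  rw [irreducible_iff]
  refine ⟨fun hu => ?_, fun g h hgh => ?_⟩
  · have := natDegree_eq_zero_of_isUnit hu
    omega
  · by_contra hc
    push_neg at hc
    obtain ⟨hgu, hhu⟩ := hc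
    have hg0 : g ≠ 0 := fun h0 => hf0 (by rw [hgh, h0, zero_mul])
    have hh0 : h ≠ 0 := fun h0 => hf0 (by rw [hgh, h0, mul_zero])
    have hdg : 0 < g.natDegree := by
      by_contra h0
      push_neg at h0
      apply hgu
      have h00 : g.natDegree = 0 := by omega
      rw [eq_C_of_natDegree_eq_zero h00]
      refine isUnit_C.2 (isUnit_iff_ne_zero.2 fun hc0 => hg0 ?_)
      rw [eq_C_of_natDegree_eq_zero h00, hc0, map_zero]
    have hdh : 0 < h.natDegree := by
      by_contra h0
      push_neg at h0
      apply hhu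
      have h00 : h.natDegree = 0 := by omega
      rw [eq_C_of_natDegree_eq_zero h00]
      refine isUnit_C.2 (isUnit_iff_ne_zero.2 fun hc0 => hh0 ?_)
      rw [eq_C_of_natDegree_eq_zero h00, hc0, map_zero]
    have hsum : g.natDegree + h.natDegree = p := by
      rw [← natDegree_mul hg0 hh0, ← hgh, hnd]
    set q : K[X] := g * C (g.leadingCoeff)⁻¹ with hqdef
    have hqm : q.Monic := monic_mul_leadingCoeff_inv hg0
    have hqdvd : q ∣ (X ^ p - X - C a : K[X]) := by
      refine dvd_trans ⟨C g.leadingCoeff, ?_⟩ ⟨h, hgh⟩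
      rw [hqdef, mul_assoc, ← C_mul, inv_mul_cancel₀ (leadingCoeff_ne_zero.2 hg0), C_1, mul_one]
    have hqdeg : q.natDegree = g.natDegree := by
      rw [hqdef, natDegree_mul hg0 (by simp [leadingCoeff_ne_zero.2 hg0]), natDegree_C, add_zero]
    exact AS_no_middle_divisor p a hna q hqdvd hqm (by omega) (by omega)

end AS


/-- The Artin–Schreier dichotomy: over a field `K` of characteristic `p > 0`, either
`x^p - x - a` has a root `b ∈ K`, in which case its roots are exactly
`b, b+1, …, b+(p-1)`; or it has no root in `K`, in which case it is irreducible and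
`K[x]/(x^p - x - a)` is a Galois extension of `K` of degree `p`. -/
theorem stmt5 {K : Type*} [Field K] (p : ℕ) [Fact p.Prime] [CharP K p] (a : K) :
    (∀ b : K, b ^ p - b = a →
      ∀ z : K, z ^ p - z = a ↔ ∃ n : ℕ, n < p ∧ z = b + (n : K)) ∧
    ((¬ ∃ b : K, b ^ p - b = a) →
      Irreducible (X ^ p - X - C a : K[X]) ∧
      ∀ [Fact (Irreducible (X ^ p - X - C a : K[X]))],
        IsGalois K (AdjoinRoot (X ^ p - X - C a : K[X])) ∧
        Module.finrank K (AdjoinRoot (X ^ p - X - C a : K[X])) = p) := by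
  constructor
  · intro b hb z
    exact AS_root_iff p a b hb z
  · intro hna
    refine ⟨AS_irreducible p a hna, ?_⟩
    intro hFact
    haveI := hFact
    set f : K[X] := X ^ p - X - C a with hf
    have hf0 : f ≠ 0 := (AS_monic p a).ne_zero
    letI : CharP (AdjoinRoot f) p :=
      charP_of_injective_ringHom (algebraMap K (AdjoinRoot f)).injective p
    have hβ : (AdjoinRoot.root f) ^ p - AdjoinRoot.root f = algebraMap K (AdjoinRoot f) a := by
      have h := AdjoinRoot.eval₂_root f
      rw [hf] at h
      simp only [eval₂_sub, eval₂_pow, eval₂_X, eval₂_C] at h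
      rw [AdjoinRoot.algebraMap_eq]
      linear_combination h
    haveI hsplit : IsSplittingField K (AdjoinRoot f) f := by
      constructor
      · exact AS_splits p a (algebraMap K (AdjoinRoot f)) _ hβ
      · rw [eq_top_iff, ← AdjoinRoot.adjoinRoot_eq_top (f := f)]
        apply Algebra.adjoin_mono
        rw [Set.singleton_subset_iff, mem_rootSet]
        refine ⟨hf0, ?_⟩
        rw [aeval_def, AdjoinRoot.algebraMap_eq]
        exact AdjoinRoot.eval₂_root f
    refine ⟨IsGalois.of_separable_splitting_field (AS_separable p a), ?_⟩
    rw [(AdjoinRoot.powerBasis hf0).finrank, AdjoinRoot.powerBasis_dim, AS_natDegree]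
end

section
/- Let $G$ be a group equipped with a norm $|\cdot|: G \to [0,\infty)$ satisfying $|1| = 0$ and $|xy| \leq |x| + |y|$, $|x^{-1}| = |x|$, let $\Lambda$ be a complete nonarchimedean valued Novikov field (containing elements $T^\gamma$ of every real valuation $\gamma$), let $\delta > 0$, and let $\Lambda[G]^\delta$ be the completion of the group algebra consisting of sums $\sum_{i=1}^\infty c_i x_i$ ($c_i \in \Lambda$, $x_i \in G$) with $\mathbf{v}(c_i) - \delta |x_i| \to \infty$. Then a one-dimensional representation $\rho: G \to \Lambda^{\times}$ extends continuously to a ring homomorphism $\Lambda[G]^\delta \to \Lambda$ if and only if $|\mathbf{v}(\rho(x))| \leq \delta\,|x|$ for every $x \in G$. -/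
/-- Let `G` be a group with a norm `N`, `Λ` a complete nonarchimedean valued Novikov
field (valuation `v a = -log ‖a‖`, containing elements `T^γ` of every valuation
`γ ∈ ℝ`), and `δ > 0`. A one-dimensional representation `ρ : G → Λˣ` extends
continuously to the completed group ring `Λ[G]^δ` — i.e. all series `∑ cᵢ ρ(xᵢ)`
with `v(cᵢ) - δ N(xᵢ) → ∞` converge — if and only if `|v(ρ x)| ≤ δ N(x)` for every
`x ∈ G`. -/
theorem stmt8 {Λ G : Type*} [NormedField Λ] [IsUltrametricDist Λ] [CompleteSpace Λ]
    [Group G]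
    (N : G → ℝ) (hN0 : ∀ x, 0 ≤ N x) (hN1 : N 1 = 0)
    (hNmul : ∀ x y : G, N (x * y) ≤ N x + N y) (hNinv : ∀ x : G, N x⁻¹ = N x)
    (T : ℝ → Λˣ) (hT : ∀ γ : ℝ, ‖(T γ : Λ)‖ = Real.exp (-γ))
    (δ : ℝ) (hδ : 0 < δ) (ρ : G →* Λˣ) :
    (∀ (c : ℕ → Λ) (x : ℕ → G), (∀ i, c i ≠ 0) →
        Filter.Tendsto (fun i => -Real.log ‖c i‖ - δ * N (x i))
          Filter.atTop Filter.atTop →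
        Summable fun i => c i * (ρ (x i) : Λ)) ↔
    ∀ x : G, |(-Real.log ‖(ρ x : Λ)‖)| ≤ δ * N x := by
  have hNpow : ∀ (y : G) (j : ℕ), N (y ^ j) ≤ j * N y := by
    intro y j
    induction j with
    | zero => simp [hN1]
    | succ n ih =>
      calc N (y ^ (n + 1)) = N (y ^ n * y) := by rw [pow_succ]
        _ ≤ N (y ^ n) + N y := hNmul _ _
        _ ≤ n * N y + N y := by linarith
        _ = (n + 1 : ℕ) * N y := by push_cast; ring
  constructor
  · intro H
    -- key : no y can have log ‖ρ y‖ > δ N y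
    have key : ∀ y : G, Real.log ‖(ρ y : Λ)‖ ≤ δ * N y := by
      intro y
      by_contra hy
      push_neg at hy
      set b := Real.log ‖(ρ y : Λ)‖ with hb
      set ε := (b - δ * N y) / 2 with hε
      have hεpos : 0 < ε := by
        have := hy; simp only [hε]; linarith
      have hA : b - (δ * N y + ε) = ε := by simp only [hε]; ring
      have hρpos : (0:ℝ) < ‖(ρ y : Λ)‖ := norm_pos_iff.mpr (Units.ne_zero _)
      have hS := H (fun j => (T ((j : ℝ) * (δ * N y + ε)) : Λ)) (fun j => y ^ j)
        (fun j => Units.ne_zero _) ?_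
      · have h0 := hS.tendsto_cofinite_zero
        rw [Nat.cofinite_eq_atTop] at h0
        have hnorm : ∀ j : ℕ,
            ‖(T ((j : ℝ) * (δ * N y + ε)) : Λ) * (ρ (y ^ j) : Λ)‖
              = Real.exp ((j : ℝ) * ε) := by
          intro j
          rw [norm_mul, hT]
          have : (ρ (y ^ j) : Λ) = ((ρ y : Λ)) ^ j := by
            rw [map_pow]; rfl
          rw [this, norm_pow, ← Real.exp_log hρpos, ← Real.exp_nat_mul,
            ← Real.exp_add]
          congr 1
          rw [← hb]
          have : (j : ℝ) * b - (j : ℝ) * (δ * N y + ε) = (j : ℝ) * ε := by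
            rw [← mul_sub, hA]
          linarith
        have h1 : Filter.Tendsto
            (fun j : ℕ => ‖(T ((j : ℝ) * (δ * N y + ε)) : Λ) * (ρ (y ^ j) : Λ)‖)
            Filter.atTop (nhds 0) := by simpa using h0.norm
        have h2 : ∀ j : ℕ,
            (1:ℝ) ≤ ‖(T ((j : ℝ) * (δ * N y + ε)) : Λ) * (ρ (y ^ j) : Λ)‖ := by
          intro j
          rw [hnorm j]
          exact Real.one_le_exp (by positivity)
        have := ge_of_tendsto' h1 (fun j => (h2 j))
        linarith
      · -- tendsto condition
        apply Filter.tendsto_atTop_mono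
          (f := fun j : ℕ => (j : ℝ) * ε)
        · intro j
          have hlog : -Real.log ‖(T ((j : ℝ) * (δ * N y + ε)) : Λ)‖
              = (j : ℝ) * (δ * N y + ε) := by
            rw [hT, Real.log_exp]; ring
          rw [hlog]
          have := hNpow y j
          have : δ * N (y ^ j) ≤ δ * ((j : ℝ) * N y) :=
            mul_le_mul_of_nonneg_left this hδ.le
          nlinarith
        · exact Filter.Tendsto.atTop_mul_const hεpos tendsto_natCast_atTop_atTop
    intro x
    rw [abs_le]
    have h1 := key x⁻¹
    have h2 : Real.log ‖(ρ x⁻¹ : Λ)‖ = -Real.log ‖(ρ x : Λ)‖ := by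
      rw [map_inv, Units.val_inv_eq_inv_val, norm_inv, Real.log_inv]
    rw [h2, hNinv] at h1
    have h3 := key x
    constructor <;> linarith
  · intro H c x hc htend
    apply NonarchimedeanAddGroup.summable_of_tendsto_cofinite_zero
    rw [Nat.cofinite_eq_atTop, tendsto_zero_iff_norm_tendsto_zero]
    have hbound : ∀ i, ‖c i * (ρ (x i) : Λ)‖
        ≤ Real.exp (-(-Real.log ‖c i‖ - δ * N (x i))) := by
      intro i
      rw [norm_mul]
      have hcpos : (0:ℝ) < ‖c i‖ := norm_pos_iff.mpr (hc i)
      have hρ : ‖(ρ (x i) : Λ)‖ ≤ Real.exp (δ * N (x i)) := by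
        have h1 := (abs_le.mp (H (x i))).1
        have hρpos : (0:ℝ) < ‖(ρ (x i) : Λ)‖ := norm_pos_iff.mpr (Units.ne_zero _)
        calc ‖(ρ (x i) : Λ)‖ = Real.exp (Real.log ‖(ρ (x i) : Λ)‖) :=
              (Real.exp_log hρpos).symm
          _ ≤ Real.exp (δ * N (x i)) := Real.exp_le_exp.mpr (by linarith)
      calc ‖c i‖ * ‖(ρ (x i) : Λ)‖
          ≤ ‖c i‖ * Real.exp (δ * N (x i)) :=
            mul_le_mul_of_nonneg_left hρ hcpos.le
        _ = Real.exp (-(-Real.log ‖c i‖ - δ * N (x i))) := by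
            rw [← Real.exp_log hcpos, ← Real.exp_add, Real.log_exp]; congr 1; ring
    have hlim : Filter.Tendsto
        (fun i => Real.exp (-(-Real.log ‖c i‖ - δ * N (x i))))
        Filter.atTop (nhds 0) :=
      Real.tendsto_exp_atBot.comp (Filter.tendsto_neg_atTop_atBot.comp htend)
    exact squeeze_zero (fun i => norm_nonneg _) hbound hlim
end
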